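/- Under conditional independence of all labels given the input, any minimizer of expected Hamming loss is also a minimizer of expected 0/1 (subset) loss, and conversely, provided each marginal mode is unique. -/

import Mathlib

lemma sum_pi_bool (L : ℕ) (f : Fin L → Bool → ℝ) :
    ∑ y : Fin L → Bool, ∏ k, f k (y k) = ∏ k, (f k false + f k true) := by
  have h := Finset.prod_univ_sum (fun _ : Fin L => (Finset.univ : Finset Bool)) f
  rw [Fintype.piFinset_univ] at h
  rw [← h]
  congr 1
  ext k
  simp [add_comm]

lemma marginal (L : ℕ) (p : Fin L → Bool → ℝ) (hsum : ∀ j, p j false + p j true = 1)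
    (j : Fin L) (g : Bool → ℝ) :
    ∑ y : Fin L → Bool, (∏ k, p k (y k)) * g (y j)
      = p j false * g false + p j true * g true := by
  set F : Fin L → Bool → ℝ := fun k b => if k = j then p k b * g b else p k b with hF
  have key : ∀ y : Fin L → Bool,
      (∏ k, p k (y k)) * g (y j) = ∏ k, F k (y k) := by
    intro y
    have h1 : (∏ k, p k (y k))
        = p j (y j) * ∏ k ∈ Finset.univ.erase j, p k (y k) :=
      (Finset.mul_prod_erase Finset.univ _ (Finset.mem_univ j)).symm
    have h2 : (∏ k, F k (y k))
        = F j (y j) * ∏ k ∈ Finset.univ.erase j, F k (y k) :=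
      (Finset.mul_prod_erase Finset.univ _ (Finset.mem_univ j)).symm
    have h3 : ∏ k ∈ Finset.univ.erase j, F k (y k)
        = ∏ k ∈ Finset.univ.erase j, p k (y k) :=
      Finset.prod_congr rfl (fun k hk => by
        simp [hF, (Finset.mem_erase.mp hk).1])
    rw [h1, h2, h3]
    simp only [hF, if_pos rfl]
    ring
  calc ∑ y : Fin L → Bool, (∏ k, p k (y k)) * g (y j)
      = ∑ y : Fin L → Bool, ∏ k, F k (y k) :=
        Finset.sum_congr rfl (fun y _ => key y)
    _ = ∏ k, (F k false + F k true) := sum_pi_bool L F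
    _ = p j false * g false + p j true * g true := by
        rw [Finset.prod_eq_single j (fun k _ hk => by simp [hF, hk, hsum k]) (by simp)]
        simp [hF]
/-- Under conditional independence (product distribution with unique
marginal modes), minimizers of expected Hamming loss and expected 0/1 loss coincide. -/
theorem hamming_and_zeroone_minimizers_coincide (L : ℕ) (hL : 0 < L)
    (p : Fin L → Bool → ℝ)
    (hnn : ∀ j b, 0 ≤ p j b)
    (hsum : ∀ j, p j false + p j true = 1)
    (hne : ∀ j, p j false ≠ p j true)
    (P : (Fin L → Bool) → ℝ)
    (hP : ∀ y, P y = ∏ j, p j (y j))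
    (hamLoss zoLoss : (Fin L → Bool) → ℝ)
    (hHam : ∀ yhat, hamLoss yhat =
      (1 / (L : ℝ)) * ∑ j, ∑ y : Fin L → Bool, P y * (if y j ≠ yhat j then 1 else 0))
    (hZO : ∀ yhat, zoLoss yhat = ∑ y : Fin L → Bool, P y * (if y ≠ yhat then 1 else 0)) :
    ∀ yhat : Fin L → Bool,
      ((∀ y, hamLoss yhat ≤ hamLoss y) ↔ (∀ y, zoLoss yhat ≤ zoLoss y)) := by
  -- the coordinate-wise mode
  set m : Fin L → Bool := fun j => decide (p j false < p j true) with hm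
  have hmax : ∀ j b, b ≠ m j → p j b < p j (m j) := by
    intro j b hb
    rcases lt_or_gt_of_ne (hne j) with h | h
    · have hmj : m j = true := by simp [hm, h]
      have hb' : b = false := by cases b <;> simp_all
      rw [hmj, hb']; exact h
    · have hmj : m j = false := by simp [hm, lt_asymm h]
      have hb' : b = true := by cases b <;> simp_all
      rw [hmj, hb']; exact h
  have hmax' : ∀ j b, p j b ≤ p j (m j) := by
    intro j b
    by_cases hb : b = m j
    · rw [hb]
    · exact (hmax j b hb).le
  have hmin : ∀ j b, p j (!(m j)) ≤ p j b := by
    intro j b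
    by_cases hb : b = !(m j)
    · rw [hb]
    · have : b = m j := by cases b <;> cases hB : m j <;> simp_all <;> linarith
      rw [this]
      exact (hmax j (!(m j)) (by cases m j <;> simp)).le
  have hmpos : ∀ j, 0 < p j (m j) :=
    fun j => lt_of_le_of_lt (hnn j (!(m j))) (hmax j (!(m j)) (by cases m j <;> simp))
  -- Hamming loss formula
  have hamEq : ∀ yhat, hamLoss yhat = (1 / (L : ℝ)) * ∑ j, p j (!(yhat j)) := by
    intro yhat
    rw [hHam]
    congr 1
    refine Finset.sum_congr rfl (fun j _ => ?_)
    have := marginal L p hsum j (fun b => if b ≠ yhat j then 1 else 0)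
    rw [Finset.sum_congr rfl (fun y _ => by rw [hP y]), this]
    cases hY : yhat j <;> simp
  -- 0/1 loss formula
  have zoEq : ∀ yhat, zoLoss yhat = 1 - ∏ j, p j (yhat j) := by
    intro yhat
    rw [hZO]
    have h1 : ∀ y : Fin L → Bool,
        P y * (if y ≠ yhat then 1 else 0) = P y - (if y = yhat then P y else 0) := by
      intro y; by_cases h : y = yhat <;> simp [h]
    rw [Finset.sum_congr rfl (fun y _ => h1 y), Finset.sum_sub_distrib,
        Finset.sum_ite_eq' Finset.univ yhat P, if_pos (Finset.mem_univ yhat)]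
    have h2 : ∑ y : Fin L → Bool, P y = 1 := by
      rw [Finset.sum_congr rfl (fun y _ => hP y), sum_pi_bool]
      exact Finset.prod_eq_one (fun j _ => hsum j)
    rw [h2, hP]
  -- Hamming minimizers are exactly m
  have hamMin : ∀ yhat, (∀ y, hamLoss yhat ≤ hamLoss y) ↔ yhat = m := by
    intro yhat
    constructor
    · intro h
      by_contra hne'
      obtain ⟨j0, hj0⟩ := Function.ne_iff.mp hne'
      have hstrict : hamLoss m < hamLoss yhat := by
        rw [hamEq, hamEq]
        have hLpos : (0 : ℝ) < 1 / (L : ℝ) := by positivity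
        refine mul_lt_mul_of_pos_left ?_ hLpos
        refine Finset.sum_lt_sum (fun j _ => hmin j _) ⟨j0, Finset.mem_univ j0, ?_⟩
        have hbm : (yhat j0).not = m j0 := by
          revert hj0; cases yhat j0 <;> cases m j0 <;> simp
        rw [hbm]
        exact hmax j0 (!(m j0)) (by cases m j0 <;> simp)
      exact absurd (h m) (not_le.mpr hstrict)
    · intro h y
      rw [h, hamEq, hamEq]
      have hLpos : (0 : ℝ) ≤ 1 / (L : ℝ) := by positivity
      exact mul_le_mul_of_nonneg_left (Finset.sum_le_sum (fun j _ => hmin j _)) hLpos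
  -- 0/1 minimizers are exactly m
  have zoMin : ∀ yhat, (∀ y, zoLoss yhat ≤ zoLoss y) ↔ yhat = m := by
    intro yhat
    constructor
    · intro h
      by_contra hne'
      obtain ⟨j0, hj0⟩ := Function.ne_iff.mp hne'
      have hprod : ∏ j, p j (yhat j) < ∏ j, p j (m j) := by
        have e1 : ∏ j, p j (yhat j)
            = p j0 (yhat j0) * ∏ k ∈ Finset.univ.erase j0, p k (yhat k) :=
          (Finset.mul_prod_erase Finset.univ _ (Finset.mem_univ j0)).symm
        have e2 : ∏ j, p j (m j)
            = p j0 (m j0) * ∏ k ∈ Finset.univ.erase j0, p k (m k) :=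
          (Finset.mul_prod_erase Finset.univ _ (Finset.mem_univ j0)).symm
        have hppos : 0 < ∏ k ∈ Finset.univ.erase j0, p k (m k) :=
          Finset.prod_pos (fun k _ => hmpos k)
        calc ∏ j, p j (yhat j)
            = p j0 (yhat j0) * ∏ k ∈ Finset.univ.erase j0, p k (yhat k) := e1
          _ ≤ p j0 (yhat j0) * ∏ k ∈ Finset.univ.erase j0, p k (m k) :=
              mul_le_mul_of_nonneg_left
                (Finset.prod_le_prod (fun k _ => hnn k _) (fun k _ => hmax' k _))
                (hnn j0 _)
          _ < p j0 (m j0) * ∏ k ∈ Finset.univ.erase j0, p k (m k) :=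
              mul_lt_mul_of_pos_right (hmax j0 _ hj0) hppos
          _ = ∏ j, p j (m j) := e2.symm
      have hstrict : zoLoss m < zoLoss yhat := by
        rw [zoEq, zoEq]; linarith
      exact absurd (h m) (not_le.mpr hstrict)
    · intro h y
      rw [h, zoEq, zoEq]
      have : ∏ j, p j (y j) ≤ ∏ j, p j (m j) :=
        Finset.prod_le_prod (fun k _ => hnn k _) (fun k _ => hmax' k _)
      linarith
  intro yhat
  rw [hamMin yhat, zoMin yhat]
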